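/- Let g_Θ(x) := W^L f^L[⋯ W^1 f^1[W^0 x]] be a feed-forward network with L hidden layers where each activation f^l is a_Lip-Lipschitz with f^l(0)=0. For parameter tuples Θ = (W^L,…,W^0) and Γ = (V^L,…,V^0) in the set A_h (so that Σ_j ‖W^j‖₁ ≤ M + 1/ν and likewise for Γ), it holds that ‖g_Θ − g_Γ‖_n ≤ 2 a_Lip^L √L ‖x‖_n ( (2/L)(M + 1/ν) )^L ‖Θ − Γ‖_F, where ‖g‖_n² := (1/n)Σ_{i=1}^n ‖g(x_i)‖² and ‖Θ−Γ‖_F is the Frobenius norm of the stacked parameter difference. -/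

import Mathlib

/-- Euclidean norm of a finite real vector. -/
noncomputable def e2 {m : Type*} [Fintype m] (v : m → ℝ) : ℝ :=
  Real.sqrt (∑ i, (v i) ^ 2)

/-- The entrywise `ℓ₁`-norm of a matrix. -/
noncomputable def ent1 {m n : Type*} [Fintype m] [Fintype n] (A : Matrix m n ℝ) : ℝ :=
  ∑ i, ∑ j, |A i j|

/-- The `ℓ₁→ℓ₁` induced operator norm of a matrix. -/
noncomputable def op11 {m n : Type*} [Fintype m] [Fintype n] (B : Matrix m n ℝ) : ℝ :=
  sSup {r : ℝ | ∃ x : n → ℝ, x ≠ 0 ∧ r = (∑ i, |B.mulVec x i|) / (∑ j, |x j|)}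

/-- The feed-forward network `net k x = W^{k-1} f^{k-1} [⋯ W^1 f^1 [W^0 (f^0 x)]]`;
with `f^0 = id` and `k = L+1` this is `g_Θ(x) = W^L f^L[⋯ W^1 f^1[W^0 x]]`. -/
def netFun (p : ℕ → ℕ) (W : ∀ l : ℕ, Matrix (Fin (p (l + 1))) (Fin (p l)) ℝ)
    (f : ∀ l : ℕ, (Fin (p l) → ℝ) → (Fin (p l) → ℝ)) :
    (k : ℕ) → (Fin (p 0) → ℝ) → (Fin (p k) → ℝ)
  | 0, x => x
  | (k + 1), x => (W k).mulVec (f k (netFun p W f k x))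

noncomputable def frob9 {m n : Type*} [Fintype m] [Fintype n] (A : Matrix m n ℝ) : ℝ :=
  Real.sqrt (∑ i, ∑ j, (A i j) ^ 2)

variable {m n : Type*} [Fintype m] [Fintype n]

lemma e2_nonneg (v : m → ℝ) : 0 ≤ e2 v := Real.sqrt_nonneg _

lemma e2_sq (v : m → ℝ) : e2 v ^ 2 = ∑ i, (v i) ^ 2 :=
  Real.sq_sqrt (Finset.sum_nonneg fun _ _ => sq_nonneg _)

lemma frob9_nonneg (A : Matrix m n ℝ) : 0 ≤ frob9 A := Real.sqrt_nonneg _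

lemma ent1_nonneg (A : Matrix m n ℝ) : 0 ≤ ent1 A :=
  Finset.sum_nonneg fun _ _ => Finset.sum_nonneg fun _ _ => abs_nonneg _

lemma abs_le_e2 (v : m → ℝ) (i : m) : |v i| ≤ e2 v := by
  rw [← Real.sqrt_sq_eq_abs]
  exact Real.sqrt_le_sqrt (Finset.single_le_sum (fun j _ => sq_nonneg (v j)) (Finset.mem_univ i))

lemma e2_le_sum_abs (v : m → ℝ) : e2 v ≤ ∑ i, |v i| := by
  have h : ∑ i, (v i) ^ 2 ≤ (∑ i, |v i|) ^ 2 := by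
    rw [sq, Finset.sum_mul_sum]
    calc ∑ i, (v i) ^ 2 = ∑ i, |v i| * |v i| := by
          refine Finset.sum_congr rfl fun i _ => ?_
          rw [← sq_abs]; ring
      _ ≤ ∑ i, ∑ j, |v i| * |v j| := by
          refine Finset.sum_le_sum fun i _ => ?_
          calc |v i| * |v i| ≤ |v i| * ∑ j, |v j| := by
                refine mul_le_mul_of_nonneg_left ?_ (abs_nonneg _)
                exact Finset.single_le_sum (fun j _ => abs_nonneg (v j)) (Finset.mem_univ i)
            _ = ∑ j, |v i| * |v j| := by rw [Finset.mul_sum]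
  calc e2 v ≤ Real.sqrt ((∑ i, |v i|) ^ 2) := Real.sqrt_le_sqrt h
    _ = ∑ i, |v i| := Real.sqrt_sq (Finset.sum_nonneg fun _ _ => abs_nonneg _)

lemma e2_add_le (u v : m → ℝ) : e2 (u + v) ≤ e2 u + e2 v := by
  have key : ∀ w : m → ℝ, e2 w = ‖(WithLp.equiv 2 (m → ℝ)).symm w‖ := by
    intro w
    rw [EuclideanSpace.norm_eq]
    simp [e2, Real.norm_eq_abs, sq_abs]
  rw [key, key, key]
  have : (WithLp.equiv 2 (m → ℝ)).symm (u + v)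
      = (WithLp.equiv 2 (m → ℝ)).symm u + (WithLp.equiv 2 (m → ℝ)).symm v := rfl
  rw [this]
  exact norm_add_le _ _

section T2
variable {m n : Type*} [Fintype m] [Fintype n]

lemma e2_mulVec_le_ent1 (A : Matrix m n ℝ) (v : n → ℝ) :
    e2 (A.mulVec v) ≤ ent1 A * e2 v := by
  calc e2 (A.mulVec v) ≤ ∑ i, |A.mulVec v i| := e2_le_sum_abs _
    _ ≤ ∑ i, ∑ j, |A i j| * e2 v := by
        refine Finset.sum_le_sum fun i _ => ?_
        calc |A.mulVec v i| = |∑ j, A i j * v j| := rfl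
          _ ≤ ∑ j, |A i j * v j| := Finset.abs_sum_le_sum_abs _ _
          _ ≤ ∑ j, |A i j| * e2 v := by
              refine Finset.sum_le_sum fun j _ => ?_
              rw [abs_mul]
              exact mul_le_mul_of_nonneg_left (abs_le_e2 v j) (abs_nonneg _)
    _ = ent1 A * e2 v := by rw [ent1, Finset.sum_mul]; exact Finset.sum_congr rfl fun i _ => by rw [Finset.sum_mul]

lemma e2_mulVec_le_frob9 (A : Matrix m n ℝ) (v : n → ℝ) :
    e2 (A.mulVec v) ≤ frob9 A * e2 v := by
  have h : ∑ i, (A.mulVec v i) ^ 2 ≤ (∑ i, ∑ j, (A i j) ^ 2) * ∑ j, (v j) ^ 2 := by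
    rw [Finset.sum_mul]
    refine Finset.sum_le_sum fun i _ => ?_
    exact Finset.sum_mul_sq_le_sq_mul_sq Finset.univ (fun j => A i j) v
  calc e2 (A.mulVec v) ≤ Real.sqrt ((∑ i, ∑ j, (A i j) ^ 2) * ∑ j, (v j) ^ 2) :=
        Real.sqrt_le_sqrt h
    _ = frob9 A * e2 v := Real.sqrt_mul
        (Finset.sum_nonneg fun _ _ => Finset.sum_nonneg fun _ _ => sq_nonneg _) _

lemma sum_abs_mulVec_le (B : Matrix m n ℝ) (v : n → ℝ) :
    ∑ i, |B.mulVec v i| ≤ op11 B * ∑ j, |v j| := by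
  by_cases hv : v = 0
  · simp [hv, Matrix.mulVec_zero]
  · have hd : 0 < ∑ j, |v j| := by
      rcases Function.ne_iff.mp hv with ⟨j, hj⟩
      have : 0 < |v j| := abs_pos.mpr hj
      have := Finset.single_le_sum (fun k _ => abs_nonneg (v k)) (Finset.mem_univ j)
      linarith
    have hbdd : BddAbove {r : ℝ | ∃ x : n → ℝ, x ≠ 0 ∧
        r = (∑ i, |B.mulVec x i|) / (∑ j, |x j|)} := by
      refine ⟨ent1 B, fun r hr => ?_⟩
      obtain ⟨y, hy, rfl⟩ := hr
      have hdy : 0 < ∑ j, |y j| := by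
        rcases Function.ne_iff.mp hy with ⟨j, hj⟩
        have : 0 < |y j| := abs_pos.mpr hj
        have := Finset.single_le_sum (fun k _ => abs_nonneg (y k)) (Finset.mem_univ j)
        linarith
      rw [div_le_iff₀ hdy]
      calc ∑ i, |B.mulVec y i| ≤ ∑ i, ∑ j, |B i j| * |y j| := by
            refine Finset.sum_le_sum fun i _ => ?_
            calc |B.mulVec y i| ≤ ∑ j, |B i j * y j| := Finset.abs_sum_le_sum_abs _ _
              _ = ∑ j, |B i j| * |y j| := by simp [abs_mul]
        _ = ∑ j, (∑ i, |B i j|) * |y j| := by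
            rw [Finset.sum_comm]; simp [Finset.sum_mul]
        _ ≤ ∑ j, ent1 B * |y j| := by
            refine Finset.sum_le_sum fun j _ => ?_
            refine mul_le_mul_of_nonneg_right ?_ (abs_nonneg _)
            refine Finset.sum_le_sum fun i _ => ?_
            exact Finset.single_le_sum (fun k _ => abs_nonneg (B i k)) (Finset.mem_univ j)
        _ = ent1 B * ∑ j, |y j| := by rw [Finset.mul_sum]
    have hmem : (∑ i, |B.mulVec v i|) / (∑ j, |v j|) ∈ {r : ℝ | ∃ x : n → ℝ, x ≠ 0 ∧
        r = (∑ i, |B.mulVec x i|) / (∑ j, |x j|)} := ⟨v, hv, rfl⟩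
    have := le_csSup hbdd hmem
    rw [div_le_iff₀ hd] at this
    calc ∑ i, |B.mulVec v i| ≤ op11 B * ∑ j, |v j| := this

lemma ent1_mul_le (B : Matrix m n ℝ) {k : Type*} [Fintype k] (A : Matrix n k ℝ) :
    ent1 (B * A) ≤ op11 B * ent1 A := by
  have h : ∀ j, ∑ i, |(B * A) i j| ≤ op11 B * ∑ i, |A i j| := by
    intro j
    have : ∀ i, (B * A) i j = B.mulVec (fun k => A k j) i := by
      intro i; simp [Matrix.mul_apply, Matrix.mulVec, dotProduct]
    simp only [this]
    exact sum_abs_mulVec_le B _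
  calc ent1 (B * A) = ∑ j, ∑ i, |(B * A) i j| := by rw [ent1]; exact Finset.sum_comm
    _ ≤ ∑ j, op11 B * ∑ i, |A i j| := Finset.sum_le_sum fun j _ => h j
    _ = op11 B * ∑ j, ∑ i, |A i j| := by rw [Finset.mul_sum]
    _ = op11 B * ent1 A := by rw [ent1, Finset.sum_comm]

lemma ent1_add_le (A B : Matrix m n ℝ) : ent1 (A + B) ≤ ent1 A + ent1 B := by
  rw [ent1, ent1, ent1, ← Finset.sum_add_distrib]
  refine Finset.sum_le_sum fun i _ => ?_
  rw [← Finset.sum_add_distrib]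
  exact Finset.sum_le_sum fun j _ => abs_add_le _ _

lemma op11_nonneg (B : Matrix m n ℝ) : 0 ≤ op11 B := by
  set S := {r : ℝ | ∃ x : n → ℝ, x ≠ 0 ∧ r = (∑ i, |B.mulVec x i|) / (∑ j, |x j|)}
  rcases Set.eq_empty_or_nonempty S with hS | hS
  · rw [op11]; rw [show {r : ℝ | ∃ x : n → ℝ, x ≠ 0 ∧
      r = (∑ i, |B.mulVec x i|) / (∑ j, |x j|)} = S from rfl, hS, Real.sSup_empty]
  · obtain ⟨r, hr⟩ := hS
    have hr0 : 0 ≤ r := by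
      obtain ⟨y, _, rfl⟩ := hr
      exact div_nonneg (Finset.sum_nonneg fun _ _ => abs_nonneg _)
        (Finset.sum_nonneg fun _ _ => abs_nonneg _)
    have hbdd : BddAbove S := by
      refine ⟨ent1 B, fun r' hr' => ?_⟩
      obtain ⟨y, hy, rfl⟩ := hr'
      have hdy : 0 < ∑ j, |y j| := by
        rcases Function.ne_iff.mp hy with ⟨j, hj⟩
        have : 0 < |y j| := abs_pos.mpr hj
        have := Finset.single_le_sum (fun k _ => abs_nonneg (y k)) (Finset.mem_univ j)
        linarith
      rw [div_le_iff₀ hdy]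
      calc ∑ i, |B.mulVec y i| ≤ ∑ i, ∑ j, |B i j| * |y j| := by
            refine Finset.sum_le_sum fun i _ => ?_
            calc |B.mulVec y i| ≤ ∑ j, |B i j * y j| := Finset.abs_sum_le_sum_abs _ _
              _ = ∑ j, |B i j| * |y j| := by simp [abs_mul]
        _ = ∑ j, (∑ i, |B i j|) * |y j| := by
            rw [Finset.sum_comm]; simp [Finset.sum_mul]
        _ ≤ ∑ j, ent1 B * |y j| := by
            refine Finset.sum_le_sum fun j _ => ?_
            refine mul_le_mul_of_nonneg_right ?_ (abs_nonneg _)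
            refine Finset.sum_le_sum fun i _ => ?_
            exact Finset.single_le_sum (fun k _ => abs_nonneg (B i k)) (Finset.mem_univ j)
        _ = ent1 B * ∑ j, |y j| := by rw [Finset.mul_sum]
    exact le_trans hr0 (le_csSup hbdd hr)

end T2

section T3

variable (p : ℕ → ℕ) (W V : ∀ l : ℕ, Matrix (Fin (p (l + 1))) (Fin (p l)) ℝ)
  (f : ∀ l : ℕ, (Fin (p l) → ℝ) → (Fin (p l) → ℝ)) {aLip : ℝ}

lemma net_size (haLip : 0 ≤ aLip) (hf0 : f 0 = id)
    (hfLip : ∀ l (z z' : Fin (p l) → ℝ), e2 (f l z - f l z') ≤ aLip * e2 (z - z'))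
    (hfzero : ∀ l, f l 0 = 0) :
    ∀ (k : ℕ) (x : Fin (p 0) → ℝ), e2 (netFun p V f (k+1) x)
      ≤ aLip ^ k * ((∏ j ∈ Finset.range (k+1), ent1 (V j)) * e2 x) := by
  intro k
  induction k with
  | zero =>
      intro x
      show e2 ((V 0).mulVec (f 0 (netFun p V f 0 x))) ≤ _
      rw [hf0]
      simpa [netFun] using e2_mulVec_le_ent1 (V 0) x
  | succ k ih =>
      intro x
      have hf := hfLip (k+1) (netFun p V f (k+1) x) 0
      rw [hfzero, sub_zero, sub_zero] at hf
      calc e2 (netFun p V f (k+2) x)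
          ≤ ent1 (V (k+1)) * e2 (f (k+1) (netFun p V f (k+1) x)) := e2_mulVec_le_ent1 _ _
        _ ≤ ent1 (V (k+1)) * (aLip * e2 (netFun p V f (k+1) x)) :=
            mul_le_mul_of_nonneg_left hf (ent1_nonneg _)
        _ ≤ ent1 (V (k+1)) * (aLip * (aLip ^ k *
              ((∏ j ∈ Finset.range (k+1), ent1 (V j)) * e2 x))) :=
            mul_le_mul_of_nonneg_left (mul_le_mul_of_nonneg_left (ih x) haLip) (ent1_nonneg _)
        _ = aLip ^ (k+1) * ((∏ j ∈ Finset.range (k+2), ent1 (V j)) * e2 x) := by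
            rw [Finset.prod_range_succ (fun j => ent1 (V j)) (k+1)]; ring

lemma net_diff (haLip : 0 ≤ aLip) (hf0 : f 0 = id)
    (hfLip : ∀ l (z z' : Fin (p l) → ℝ), e2 (f l z - f l z') ≤ aLip * e2 (z - z'))
    (hfzero : ∀ l, f l 0 = 0) :
    ∀ (k : ℕ) (x : Fin (p 0) → ℝ),
      e2 (netFun p W f (k+1) x - netFun p V f (k+1) x)
      ≤ aLip ^ k * ((∑ l ∈ Finset.range (k+1),
          (∏ j ∈ (Finset.range (k+1)).erase l, (ent1 (W j) + ent1 (V j)))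
            * frob9 (W l - V l)) * e2 x) := by
  intro k
  induction k with
  | zero =>
      intro x
      show e2 ((W 0).mulVec (f 0 (netFun p W f 0 x)) - (V 0).mulVec (f 0 (netFun p V f 0 x))) ≤ _
      rw [hf0]
      have h : (W 0).mulVec (id (netFun p W f 0 x)) - (V 0).mulVec (id (netFun p V f 0 x))
          = (W 0 - V 0).mulVec x := by
        show (W 0).mulVec x - (V 0).mulVec x = _
        rw [Matrix.sub_mulVec]
      rw [h]
      simpa using e2_mulVec_le_frob9 (W 0 - V 0) x
  | succ k ih =>
      intro x
      set nW := netFun p W f (k+1) x with hnW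
      set nV := netFun p V f (k+1) x with hnV
      set c : ℕ → ℝ := fun j => ent1 (W j) + ent1 (V j) with hc
      set Sk : ℝ := ∑ l ∈ Finset.range (k+1),
          (∏ j ∈ (Finset.range (k+1)).erase l, c j) * frob9 (W l - V l) with hSk
      set Pk : ℝ := ∏ j ∈ Finset.range (k+1), c j with hPk
      have hcnn : ∀ j, 0 ≤ c j := fun j => add_nonneg (ent1_nonneg _) (ent1_nonneg _)
      have hSknn : 0 ≤ Sk := Finset.sum_nonneg fun l _ => mul_nonneg
        (Finset.prod_nonneg fun j _ => hcnn j) (frob9_nonneg _)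
      have hPknn : 0 ≤ Pk := Finset.prod_nonneg fun j _ => hcnn j
      have he2x : 0 ≤ e2 x := e2_nonneg _
      have split : netFun p W f (k+2) x - netFun p V f (k+2) x
          = (W (k+1)).mulVec (f (k+1) nW - f (k+1) nV)
            + (W (k+1) - V (k+1)).mulVec (f (k+1) nV) := by
        show (W (k+1)).mulVec (f (k+1) nW) - (V (k+1)).mulVec (f (k+1) nV) = _
        rw [Matrix.mulVec_sub, Matrix.sub_mulVec]
        abel
      -- size bound for nV
      have hsize : e2 (f (k+1) nV) ≤ aLip * (aLip ^ k * (Pk * e2 x)) := by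
        have hf := hfLip (k+1) nV 0
        rw [hfzero, sub_zero, sub_zero] at hf
        refine le_trans hf (mul_le_mul_of_nonneg_left ?_ haLip)
        refine le_trans (net_size p V f haLip hf0 hfLip hfzero k x) ?_
        refine mul_le_mul_of_nonneg_left (mul_le_mul_of_nonneg_right ?_ he2x) (pow_nonneg haLip k)
        exact Finset.prod_le_prod (fun j _ => ent1_nonneg _)
          (fun j _ => le_add_of_nonneg_left (ent1_nonneg _))
      have h2 : e2 ((W (k+1) - V (k+1)).mulVec (f (k+1) nV))
          ≤ frob9 (W (k+1) - V (k+1)) * (aLip * (aLip ^ k * (Pk * e2 x))) :=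
        le_trans (e2_mulVec_le_frob9 _ _) (mul_le_mul_of_nonneg_left hsize (frob9_nonneg _))
      have h1 : e2 ((W (k+1)).mulVec (f (k+1) nW - f (k+1) nV))
          ≤ c (k+1) * (aLip * (aLip ^ k * (Sk * e2 x))) := by
        have hfd := hfLip (k+1) nW nV
        calc e2 ((W (k+1)).mulVec (f (k+1) nW - f (k+1) nV))
            ≤ ent1 (W (k+1)) * e2 (f (k+1) nW - f (k+1) nV) := e2_mulVec_le_ent1 _ _
          _ ≤ ent1 (W (k+1)) * (aLip * e2 (nW - nV)) :=
              mul_le_mul_of_nonneg_left hfd (ent1_nonneg _)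
          _ ≤ ent1 (W (k+1)) * (aLip * (aLip ^ k * (Sk * e2 x))) :=
              mul_le_mul_of_nonneg_left (mul_le_mul_of_nonneg_left
                (ih x) haLip) (ent1_nonneg _)
          _ ≤ c (k+1) * (aLip * (aLip ^ k * (Sk * e2 x))) := by
              refine mul_le_mul_of_nonneg_right (le_add_of_nonneg_right (ent1_nonneg _)) ?_
              exact mul_nonneg haLip (mul_nonneg (pow_nonneg haLip k)
                (mul_nonneg hSknn he2x))
      -- the combinatorial identity
      have hid : ∑ l ∈ Finset.range (k+2),
          (∏ j ∈ (Finset.range (k+2)).erase l, c j) * frob9 (W l - V l)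
          = c (k+1) * Sk + Pk * frob9 (W (k+1) - V (k+1)) := by
        rw [Finset.sum_range_succ]
        have hlast : (Finset.range (k+2)).erase (k+1) = Finset.range (k+1) := by
          rw [Finset.range_add_one, Finset.erase_insert Finset.notMem_range_self]
        have hmid : ∀ l ∈ Finset.range (k+1),
            (∏ j ∈ (Finset.range (k+2)).erase l, c j)
              = c (k+1) * ∏ j ∈ (Finset.range (k+1)).erase l, c j := by
          intro l hl
          have hne : (k+1) ≠ l := by
            have := Finset.mem_range.mp hl; omega
          rw [Finset.range_add_one, Finset.erase_insert_of_ne hne]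
          exact Finset.prod_insert (fun hmem =>
            Finset.notMem_range_self (Finset.mem_of_mem_erase hmem))
        rw [hlast, hSk, Finset.mul_sum]
        congr 1
        refine Finset.sum_congr rfl fun l hl => ?_
        rw [hmid l hl]; ring
      calc e2 (netFun p W f (k+2) x - netFun p V f (k+2) x)
          ≤ e2 ((W (k+1)).mulVec (f (k+1) nW - f (k+1) nV))
            + e2 ((W (k+1) - V (k+1)).mulVec (f (k+1) nV)) := by
            rw [split]; exact e2_add_le _ _
        _ ≤ c (k+1) * (aLip * (aLip ^ k * (Sk * e2 x)))
            + frob9 (W (k+1) - V (k+1)) * (aLip * (aLip ^ k * (Pk * e2 x))) :=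
            add_le_add h1 h2
        _ = aLip ^ (k+1) * ((c (k+1) * Sk + Pk * frob9 (W (k+1) - V (k+1))) * e2 x) := by
            ring
        _ = aLip ^ (k+1) * ((∑ l ∈ Finset.range (k+2),
            (∏ j ∈ (Finset.range (k+2)).erase l, c j) * frob9 (W l - V l)) * e2 x) := by
            rw [hid]

end T3

lemma amgm9 {ι : Type*} (s : Finset ι) (c : ι → ℝ) (hc : ∀ i ∈ s, 0 ≤ c i)
    {L : ℕ} (hL : 0 < L) (hcard : s.card = L) :
    ∏ i ∈ s, c i ≤ ((∑ i ∈ s, c i) / L) ^ L := by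
  have hLne : (L:ℝ) ≠ 0 := Nat.cast_ne_zero.mpr hL.ne'
  have hw : ∑ _i ∈ s, ((L:ℝ)⁻¹) = 1 := by
    rw [Finset.sum_const, hcard, nsmul_eq_mul]
    field_simp
  have h := Real.geom_mean_le_arith_mean_weighted s (fun _ => (L:ℝ)⁻¹) c
    (fun i _ => by positivity) hw hc
  have hrhs : ∑ i ∈ s, (L:ℝ)⁻¹ * c i = (∑ i ∈ s, c i) / L := by
    rw [← Finset.mul_sum]; field_simp
  rw [hrhs] at h
  have hLHSnn : 0 ≤ ∏ i ∈ s, c i ^ ((L:ℝ)⁻¹) :=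
    Finset.prod_nonneg fun i hi => Real.rpow_nonneg (hc i hi) _
  have hpow := pow_le_pow_left₀ hLHSnn h L
  have hLHS : (∏ i ∈ s, c i ^ ((L:ℝ)⁻¹)) ^ L = ∏ i ∈ s, c i := by
    rw [← Finset.prod_pow]
    refine Finset.prod_congr rfl fun i hi => ?_
    rw [← Real.rpow_natCast (c i ^ ((L:ℝ)⁻¹)) L, ← Real.rpow_mul (hc i hi),
      inv_mul_cancel₀ hLne, Real.rpow_one]
  rwa [hLHS] at hpow

/-- Lipschitz property of networks on the unit ball `A_h` of the
regularizer `h(Θ) = Σ_l ‖G^l W^l‖₁ + ν Σ_l ‖Π_l W^l‖₁`: for `Θ, Γ ∈ A_h`,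
`‖g_Θ − g_Γ‖_n ≤ 2 a_Lip^L √L ‖x‖_n ((2/L)(M + 1/ν))^L ‖Θ − Γ‖_F`. -/
theorem stmt9 (L : ℕ) (hL : 0 < L) (p q : ℕ → ℕ)
    (W V : ∀ l : ℕ, Matrix (Fin (p (l + 1))) (Fin (p l)) ℝ)
    (f : ∀ l : ℕ, (Fin (p l) → ℝ) → (Fin (p l) → ℝ))
    (aLip : ℝ) (haLip : 0 ≤ aLip)
    (hf0 : f 0 = id)
    (hfLip : ∀ l (z z' : Fin (p l) → ℝ), e2 (f l z - f l z') ≤ aLip * e2 (z - z'))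
    (hfzero : ∀ l, f l 0 = 0)
    (G : ∀ l : Fin (L + 1), Matrix (Fin (q l.val)) (Fin (p (l.val + 1))) ℝ)
    (P : ∀ l : Fin (L + 1), Matrix (Fin (p (l.val + 1))) (Fin (p (l.val + 1))) ℝ)
    (H : ∀ l : Fin (L + 1), Matrix (Fin (p (l.val + 1))) (Fin (q l.val)) ℝ)
    (hProj : ∀ l, P l * P l = P l)
    (hGP : ∀ l, G l * P l = 0)
    (hHG : ∀ l, H l * G l = 1 - P l)
    (ν M : ℝ) (hν : 0 < ν)
    (hM : M = ⨆ l : Fin (L + 1), op11 (H l))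
    (hΘ : (∑ l : Fin (L + 1), ent1 (G l * W l.val))
        + ν * ∑ l : Fin (L + 1), ent1 (P l * W l.val) ≤ 1)
    (hΓ : (∑ l : Fin (L + 1), ent1 (G l * V l.val))
        + ν * ∑ l : Fin (L + 1), ent1 (P l * V l.val) ≤ 1)
    (n : ℕ) (hn : 0 < n) (x : Fin n → (Fin (p 0) → ℝ)) :
    Real.sqrt ((1 / (n : ℝ)) *
        ∑ i, (e2 (netFun p W f (L + 1) (x i) - netFun p V f (L + 1) (x i))) ^ 2)
      ≤ 2 * aLip ^ L * Real.sqrt (L : ℝ)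
        * Real.sqrt ((1 / (n : ℝ)) * ∑ i, (e2 (x i)) ^ 2)
        * ((2 / (L : ℝ)) * (M + 1 / ν)) ^ L
        * Real.sqrt (∑ l : Fin (L + 1), ∑ i, ∑ j, (W l.val i j - V l.val i j) ^ 2) := by
  have hLpos : (0:ℝ) < (L:ℝ) := by exact_mod_cast hL
  set c : ℕ → ℝ := fun j => ent1 (W j) + ent1 (V j) with hcdef
  have hcnn : ∀ j, 0 ≤ c j := fun j => add_nonneg (ent1_nonneg _) (ent1_nonneg _)
  -- M is nonnegative and dominates each op11
  have hM0 : ∀ l : Fin (L+1), op11 (H l) ≤ M := by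
    intro l; rw [hM]
    exact le_ciSup (f := fun l : Fin (L+1) => op11 (H l)) (Set.Finite.bddAbove (Set.finite_range _)) l
  have hMnn : 0 ≤ M := le_trans (op11_nonneg (H ⟨0, by omega⟩)) (hM0 _)
  have hMνnn : 0 ≤ M + 1/ν := by positivity
  -- Step 1: each parameter tuple has total ent1 norm at most M + 1/ν
  have hbound : ∀ (U : ∀ l : ℕ, Matrix (Fin (p (l + 1))) (Fin (p l)) ℝ),
      ((∑ l : Fin (L+1), ent1 (G l * U l.val))
        + ν * ∑ l : Fin (L+1), ent1 (P l * U l.val) ≤ 1) →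
      ∑ l : Fin (L+1), ent1 (U l.val) ≤ M + 1/ν := by
    intro U hU
    have hterm : ∀ l : Fin (L+1),
        ent1 (U l.val) ≤ ent1 (P l * U l.val) + M * ent1 (G l * U l.val) := by
      intro l
      have hdecomp : U l.val = P l * U l.val + H l * (G l * U l.val) := by
        rw [← Matrix.mul_assoc, hHG l, Matrix.sub_mul, Matrix.one_mul]
        abel
      calc ent1 (U l.val) = ent1 (P l * U l.val + H l * (G l * U l.val)) := by
            rw [← hdecomp]
        _ ≤ ent1 (P l * U l.val) + ent1 (H l * (G l * U l.val)) := ent1_add_le _ _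
        _ ≤ ent1 (P l * U l.val) + op11 (H l) * ent1 (G l * U l.val) :=
            add_le_add_right (ent1_mul_le _ _) _
        _ ≤ ent1 (P l * U l.val) + M * ent1 (G l * U l.val) :=
            add_le_add_right (mul_le_mul_of_nonneg_right (hM0 l) (ent1_nonneg _)) _
    have hGnn : 0 ≤ ∑ l : Fin (L+1), ent1 (G l * U l.val) :=
      Finset.sum_nonneg fun _ _ => ent1_nonneg _
    have hPnn : 0 ≤ ∑ l : Fin (L+1), ent1 (P l * U l.val) :=
      Finset.sum_nonneg fun _ _ => ent1_nonneg _
    have hGU : ∑ l : Fin (L+1), ent1 (G l * U l.val) ≤ 1 := by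
      have : 0 ≤ ν * ∑ l : Fin (L+1), ent1 (P l * U l.val) := mul_nonneg hν.le hPnn
      linarith
    have hPU : ∑ l : Fin (L+1), ent1 (P l * U l.val) ≤ 1/ν := by
      rw [le_div_iff₀ hν, mul_comm]
      linarith
    calc ∑ l : Fin (L+1), ent1 (U l.val)
        ≤ ∑ l : Fin (L+1), (ent1 (P l * U l.val) + M * ent1 (G l * U l.val)) :=
          Finset.sum_le_sum fun l _ => hterm l
      _ = (∑ l : Fin (L+1), ent1 (P l * U l.val))
          + M * ∑ l : Fin (L+1), ent1 (G l * U l.val) := by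
          rw [Finset.sum_add_distrib, Finset.mul_sum]
      _ ≤ 1/ν + M * 1 := add_le_add hPU (mul_le_mul_of_nonneg_left hGU hMnn)
      _ = M + 1/ν := by ring
  have hsumc : ∑ j ∈ Finset.range (L+1), c j ≤ 2 * (M + 1/ν) := by
    have hW' := hbound W hΘ
    have hV' := hbound V hΓ
    have eW : ∑ l : Fin (L+1), ent1 (W l.val) = ∑ j ∈ Finset.range (L+1), ent1 (W j) :=
      Fin.sum_univ_eq_sum_range (fun j => ent1 (W j)) (L+1)
    have eV : ∑ l : Fin (L+1), ent1 (V l.val) = ∑ j ∈ Finset.range (L+1), ent1 (V j) :=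
      Fin.sum_univ_eq_sum_range (fun j => ent1 (V j)) (L+1)
    have : ∑ j ∈ Finset.range (L+1), c j
        = (∑ j ∈ Finset.range (L+1), ent1 (W j)) + ∑ j ∈ Finset.range (L+1), ent1 (V j) :=
      Finset.sum_add_distrib
    rw [this, ← eW, ← eV]
    linarith
  -- Step 2: AM-GM product bound
  set Q : ℝ := ((2 / (L:ℝ)) * (M + 1/ν)) ^ L with hQdef
  have hQnn : 0 ≤ Q := pow_nonneg (mul_nonneg (by positivity) hMνnn) L
  have hprod : ∀ l ∈ Finset.range (L+1), ∏ j ∈ (Finset.range (L+1)).erase l, c j ≤ Q := by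
    intro l hl
    have hcard : ((Finset.range (L+1)).erase l).card = L := by
      rw [Finset.card_erase_of_mem hl, Finset.card_range]
      omega
    refine le_trans (amgm9 _ c (fun i _ => hcnn i) hL hcard) ?_
    refine pow_le_pow_left₀
      (div_nonneg (Finset.sum_nonneg fun j _ => hcnn j) hLpos.le) ?_ L
    have hsub : ∑ j ∈ (Finset.range (L+1)).erase l, c j ≤ ∑ j ∈ Finset.range (L+1), c j :=
      Finset.sum_le_sum_of_subset_of_nonneg (Finset.erase_subset _ _)
        (fun j _ _ => hcnn j)
    calc (∑ j ∈ (Finset.range (L+1)).erase l, c j) / (L:ℝ)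
        ≤ (2 * (M + 1/ν)) / (L:ℝ) := by
          gcongr
          exact le_trans hsub hsumc
      _ = (2 / (L:ℝ)) * (M + 1/ν) := by ring
  -- Step 3: per-sample Lipschitz bound
  set Fr : ℕ → ℝ := fun l => frob9 (W l - V l) with hFrdef
  have hFrnn : ∀ l, 0 ≤ Fr l := fun l => frob9_nonneg _
  set SF : ℝ := ∑ l ∈ Finset.range (L+1), Fr l with hSFdef
  have hSFnn : 0 ≤ SF := Finset.sum_nonneg fun l _ => hFrnn l
  set K : ℝ := aLip ^ L * (Q * SF) with hKdef
  have hKnn : 0 ≤ K := mul_nonneg (pow_nonneg haLip L) (mul_nonneg hQnn hSFnn)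
  have hKbound : ∀ i, e2 (netFun p W f (L+1) (x i) - netFun p V f (L+1) (x i))
      ≤ K * e2 (x i) := by
    intro i
    refine le_trans (net_diff p W V f haLip hf0 hfLip hfzero L (x i)) ?_
    have hS : ∑ l ∈ Finset.range (L+1),
        (∏ j ∈ (Finset.range (L+1)).erase l, c j) * Fr l ≤ Q * SF := by
      rw [hSFdef, Finset.mul_sum]
      exact Finset.sum_le_sum fun l hl =>
        mul_le_mul_of_nonneg_right (hprod l hl) (hFrnn l)
    calc aLip ^ L * ((∑ l ∈ Finset.range (L+1),
          (∏ j ∈ (Finset.range (L+1)).erase l, c j) * Fr l) * e2 (x i))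
        ≤ aLip ^ L * ((Q * SF) * e2 (x i)) :=
          mul_le_mul_of_nonneg_left
            (mul_le_mul_of_nonneg_right hS (e2_nonneg _)) (pow_nonneg haLip L)
      _ = K * e2 (x i) := by rw [hKdef]; ring
  -- Step 4: aggregate over samples
  have hLHS : Real.sqrt ((1 / (n : ℝ)) *
      ∑ i, (e2 (netFun p W f (L + 1) (x i) - netFun p V f (L + 1) (x i))) ^ 2)
      ≤ K * Real.sqrt ((1 / (n : ℝ)) * ∑ i, (e2 (x i)) ^ 2) := by
    have hsum : (1 / (n : ℝ)) *
        ∑ i, (e2 (netFun p W f (L + 1) (x i) - netFun p V f (L + 1) (x i))) ^ 2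
        ≤ K ^ 2 * ((1 / (n : ℝ)) * ∑ i, (e2 (x i)) ^ 2) := by
      have h1 : ∑ i, (e2 (netFun p W f (L + 1) (x i) - netFun p V f (L + 1) (x i))) ^ 2
          ≤ ∑ i, K ^ 2 * (e2 (x i)) ^ 2 := by
        refine Finset.sum_le_sum fun i _ => ?_
        have := pow_le_pow_left₀ (e2_nonneg _) (hKbound i) 2
        rwa [mul_pow] at this
      rw [← Finset.mul_sum] at h1
      calc (1 / (n : ℝ)) * ∑ i, (e2 (netFun p W f (L + 1) (x i)
            - netFun p V f (L + 1) (x i))) ^ 2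
          ≤ (1 / (n : ℝ)) * (K ^ 2 * ∑ i, (e2 (x i)) ^ 2) :=
            mul_le_mul_of_nonneg_left h1 (by positivity)
        _ = K ^ 2 * ((1 / (n : ℝ)) * ∑ i, (e2 (x i)) ^ 2) := by ring
    calc Real.sqrt ((1 / (n : ℝ)) *
          ∑ i, (e2 (netFun p W f (L + 1) (x i) - netFun p V f (L + 1) (x i))) ^ 2)
        ≤ Real.sqrt (K ^ 2 * ((1 / (n : ℝ)) * ∑ i, (e2 (x i)) ^ 2)) :=
          Real.sqrt_le_sqrt hsum
      _ = K * Real.sqrt ((1 / (n : ℝ)) * ∑ i, (e2 (x i)) ^ 2) := by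
          rw [Real.sqrt_mul (sq_nonneg K), Real.sqrt_sq hKnn]
  -- Step 5: Cauchy-Schwarz on the Frobenius pieces
  set T : ℝ := ∑ l : Fin (L + 1), ∑ i, ∑ j, (W l.val i j - V l.val i j) ^ 2 with hTdef
  have hTnn : 0 ≤ T := Finset.sum_nonneg fun _ _ => Finset.sum_nonneg fun _ _ =>
    Finset.sum_nonneg fun _ _ => sq_nonneg _
  have hT' : ∑ l ∈ Finset.range (L+1), (Fr l) ^ 2 = T := by
    rw [hTdef, ← Fin.sum_univ_eq_sum_range (fun l => (Fr l) ^ 2) (L+1)]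
    refine Finset.sum_congr rfl fun l _ => ?_
    rw [hFrdef]
    simp only [frob9]
    rw [Real.sq_sqrt (by positivity)]
    refine Finset.sum_congr rfl fun i _ => Finset.sum_congr rfl fun j _ => ?_
    rw [Matrix.sub_apply]
  have hSF2 : SF ≤ 2 * Real.sqrt (L:ℝ) * Real.sqrt T := by
    have hcs : SF ^ 2 ≤ ((L:ℝ) + 1) * T := by
      have h := Finset.sum_mul_sq_le_sq_mul_sq (Finset.range (L+1))
        (fun _ => (1:ℝ)) Fr
      simp only [one_mul, one_pow] at h
      rw [Finset.sum_const, Finset.card_range, nsmul_eq_mul, mul_one] at h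
      rw [hT'] at h
      rw [hSFdef]
      calc (∑ l ∈ Finset.range (L+1), Fr l) ^ 2 ≤ ((L+1 : ℕ) : ℝ) * T := h
        _ = ((L:ℝ) + 1) * T := by push_cast; ring
    have h1 : SF ≤ Real.sqrt (((L:ℝ) + 1) * T) := by
      rw [← Real.sqrt_sq hSFnn]
      exact Real.sqrt_le_sqrt hcs
    have h2 : Real.sqrt (((L:ℝ) + 1) * T) ≤ Real.sqrt (4 * (L:ℝ) * T) := by
      refine Real.sqrt_le_sqrt ?_
      have : (L:ℝ) + 1 ≤ 4 * (L:ℝ) := by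
        have : (1:ℝ) ≤ (L:ℝ) := by exact_mod_cast hL
        linarith
      nlinarith
    have h3 : Real.sqrt (4 * (L:ℝ) * T) = 2 * Real.sqrt (L:ℝ) * Real.sqrt T := by
      rw [Real.sqrt_mul (by positivity), Real.sqrt_mul (by norm_num)]
      have : Real.sqrt 4 = 2 := by
        rw [show (4:ℝ) = 2 ^ 2 by norm_num, Real.sqrt_sq (by norm_num)]
      rw [this]
    linarith
  -- Final assembly
  refine le_trans hLHS ?_
  have hK2 : K ≤ aLip ^ L * (Q * (2 * Real.sqrt (L:ℝ) * Real.sqrt T)) := by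
    rw [hKdef]
    exact mul_le_mul_of_nonneg_left (mul_le_mul_of_nonneg_left hSF2 hQnn)
      (pow_nonneg haLip L)
  calc K * Real.sqrt ((1 / (n : ℝ)) * ∑ i, (e2 (x i)) ^ 2)
      ≤ (aLip ^ L * (Q * (2 * Real.sqrt (L:ℝ) * Real.sqrt T)))
        * Real.sqrt ((1 / (n : ℝ)) * ∑ i, (e2 (x i)) ^ 2) :=
        mul_le_mul_of_nonneg_right hK2 (Real.sqrt_nonneg _)
    _ = 2 * aLip ^ L * Real.sqrt (L : ℝ)
        * Real.sqrt ((1 / (n : ℝ)) * ∑ i, (e2 (x i)) ^ 2)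
        * Q * Real.sqrt T := by ring
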